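/- arXiv:1011.4285 — 3 statements merged into one kernel-verified Lean document; each statement's English description precedes it below -/
import Mathlib

section
/- Let k be a commutative ring, A an associative unital k-algebra, C a commutative k-subalgebra of A, R ∈ (A⊗A)^× and K ∈ (C⊗C)^×, and assume that K^{1,2}K^{1,3} commutes with R^{2,3} in A^{⊗3}. Then for every n ≥ 3, the following identity holds in A^{⊗n} (slots numbered 1,…,n, products in increasing order of i): (∏_{i=3}^{n} (R^{2,i})^{-1}) · (∏_{i=2}^{n} K^{1,i}) = (∏_{i=2}^{n} K^{1,i}) · (∏_{i=3}^{n} (R^{2,i})^{-1}). -/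
/-!
STATEMENT 2: If `K^{1,2}K^{1,3}` commutes with `R^{2,3}` (in `A^{⊗3}`), then in `A^{⊗n}`
`(∏_{i=3}^{n} (R^{2,i})⁻¹) · (∏_{i=2}^{n} K^{1,i}) = (∏_{i=2}^{n} K^{1,i}) · (∏_{i=3}^{n} (R^{2,i})⁻¹)`,
where `K` lies in (the image of) `C ⊗ C` for a commutative subalgebra `C ⊆ A`.
-/

open scoped TensorProduct

noncomputable section

variable (k : Type*) [CommRing k]
variable (A : Type*) [Ring A] [Algebra k A]
variable (n : ℕ)

/-- `A^{⊗n}`. -/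
abbrev TPow := ⨂[k] (_ : Fin n), A

/-- distinct slot inclusions of `A` into `A^{⊗n}` have commuting ranges. -/
theorem commute_single {i j : Fin n} (h : i ≠ j) (a b : A) :
    Commute ((PiTensorProduct.singleAlgHom (R := k) (A := fun _ : Fin n => A) i) a)
      ((PiTensorProduct.singleAlgHom (R := k) (A := fun _ : Fin n => A) j) b) := by
  have h1 : Commute (Pi.mulSingle (M := fun _ : Fin n => A) i a)
      (Pi.mulSingle (M := fun _ : Fin n => A) j b) :=
    Pi.mulSingle_commute (f := fun _ : Fin n => A) h a b
  simpa [PiTensorProduct.singleAlgHom, MonoidHom.mulSingle_apply] using h1.tprod (R := k)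

/-- The two-leg embedding `A ⊗ A → A^{⊗n}` placing the two components in
(distinct) slots `i` and `j`. -/
def leg2 (i j : Fin n) (h : i ≠ j) : (A ⊗[k] A) →ₐ[k] TPow k A n :=
  Algebra.TensorProduct.lift
    (PiTensorProduct.singleAlgHom (R := k) (A := fun _ : Fin n => A) i)
    (PiTensorProduct.singleAlgHom (R := k) (A := fun _ : Fin n => A) j)
    (fun a b => commute_single k A n h a b)

/-- `x ↦ x^{i,j}` at the level of units, with slots of `A^{⊗n}` numbered `1, …, n`;
junk value `1` if the indices are out of range or equal. -/
def uleg (i j : ℕ) (u : (A ⊗[k] A)ˣ) : (TPow k A n)ˣ :=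
  if h : 1 ≤ i ∧ i ≤ n ∧ 1 ≤ j ∧ j ≤ n ∧ i ≠ j then
    Units.map (leg2 k A n ⟨i - 1, by omega⟩ ⟨j - 1, by omega⟩
      (Fin.ne_of_val_ne (by simp only []; omega))).toMonoidHom u
  else 1

/-- The ordered product `∏_{i=a}^{b} f i` (in increasing order of `i`). -/
def ordProd {M : Type*} [Monoid M] (a b : ℕ) (f : ℕ → M) : M :=
  ((List.range' a (b + 1 - a)).map f).prod

/-! ### Auxiliary material -/

section Ext
open PiTensorProduct
variable {ι κ : Type*} [DecidableEq ι] [DecidableEq κ] (σ : ι → κ)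

open Classical in
/-- extend a function along `σ` by `1`. -/
def extendFun (a : ι → A) : κ → A :=
  fun j => if h : ∃ i, σ i = j then a h.choose else 1

variable {σ} (hσ : Function.Injective σ)

include hσ in
lemma extendFun_update (a : ι → A) (i : ι) (x : A) :
    extendFun A σ (Function.update a i x) = Function.update (extendFun A σ a) (σ i) x := by
  funext j
  by_cases hj : ∃ i', σ i' = j
  · have hsp := hj.choose_spec
    by_cases hji : j = σ i
    · subst hji
      have hc : hj.choose = i := hσ hsp
      unfold extendFun
      rw [dif_pos hj, hc, Function.update_self, Function.update_self]
    · have hne : hj.choose ≠ i := fun h => hji (by rw [← hsp, h])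
      unfold extendFun
      rw [dif_pos hj, Function.update_of_ne hne, Function.update_of_ne hji, dif_pos hj]
  · have hji : j ≠ σ i := fun h => hj ⟨i, h.symm⟩
    unfold extendFun
    rw [dif_neg hj, Function.update_of_ne hji, dif_neg hj]

omit [DecidableEq ι] [DecidableEq κ] in
lemma extendFun_one : extendFun A σ (1 : ι → A) = 1 := by
  funext j; unfold extendFun; split <;> rfl

omit [DecidableEq ι] [DecidableEq κ] in
lemma extendFun_mul (a b : ι → A) :
    extendFun A σ (a * b) = extendFun A σ a * extendFun A σ b := by
  funext j; simp only [extendFun, Pi.mul_apply]; split <;> simp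

include hσ in
/-- the multilinear map underlying `extAlg`. -/
def extMl : MultilinearMap k (fun _ : ι => A) (⨂[k] (_ : κ), A) where
  toFun a := tprod k (extendFun A σ a)
  map_update_add' a i x y := by
    rw [extendFun_update A hσ, extendFun_update A hσ, extendFun_update A hσ]
    exact MultilinearMap.map_update_add _ _ _ _ _
  map_update_smul' a i c x := by
    rw [extendFun_update A hσ, extendFun_update A hσ]
    exact MultilinearMap.map_update_smul _ _ _ _ _

/-- the algebra map `A^{⊗ι} → A^{⊗κ}` induced by an injection `σ : ι → κ`. -/
def extAlg : (⨂[k] (_ : ι), A) →ₐ[k] ⨂[k] (_ : κ), A :=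
  liftAlgHom (extMl k A hσ)
    (by show tprod k (extendFun A σ 1) = 1; rw [extendFun_one, one_def])
    (fun x y => by
      show tprod k (extendFun A σ (x * y)) = _
      rw [extendFun_mul]
      exact map_mul (tprodMonoidHom k) _ _)

lemma extAlg_single (i : ι) (a : A) :
    extAlg k A hσ (singleAlgHom (R := k) (A := fun _ : ι => A) i a)
      = singleAlgHom (R := k) (A := fun _ : κ => A) (σ i) a := by
  show liftAlgHom _ _ _ (tprod k (MonoidHom.mulSingle (fun _ : ι => A) i a)) = _
  rw [liftAlgHom_apply, lift.tprod]
  show tprod k (extendFun A σ (Pi.mulSingle i a)) = tprod k (Pi.mulSingle (σ i) a)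
  congr 1
  have h1 : (Pi.mulSingle i a : ι → A) = Function.update (1 : ι → A) i a := rfl
  have h2 : (Pi.mulSingle (σ i) a : κ → A) = Function.update (1 : κ → A) (σ i) a := rfl
  rw [h1, h2, extendFun_update A hσ, extendFun_one]

end Ext

lemma leg2_tmul (i j : Fin n) (h : i ≠ j) (a b : A) :
    leg2 k A n i j h (a ⊗ₜ[k] b)
      = (PiTensorProduct.singleAlgHom (R := k) (A := fun _ : Fin n => A) i) a
        * (PiTensorProduct.singleAlgHom (R := k) (A := fun _ : Fin n => A) j) b := by
  unfold leg2
  rw [Algebra.TensorProduct.lift_tmul]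

lemma extAlg_leg2 {m : ℕ} {σ : Fin m → Fin n} (hσ : Function.Injective σ)
    (i j : Fin m) (h : i ≠ j) (x : A ⊗[k] A) :
    extAlg k A hσ (leg2 k A m i j h x)
      = leg2 k A n (σ i) (σ j) (fun e => h (hσ e)) x := by
  induction x with
  | zero => simp
  | add u v hu hv => rw [map_add, map_add, map_add, hu, hv]
  | tmul a b =>
    rw [leg2_tmul, leg2_tmul, map_mul, extAlg_single, extAlg_single]

lemma leg2_congr {i j i' j' : Fin n} (hi : i = i') (hj : j = j') (h : i ≠ j) (x : A ⊗[k] A) :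
    leg2 k A n i j h x = leg2 k A n i' j' (hi ▸ hj ▸ h) x := by
  subst hi; subst hj; rfl

lemma leg2_commute_disjoint (i j p q : Fin n) (hij : i ≠ j) (hpq : p ≠ q)
    (h1 : i ≠ p) (h2 : i ≠ q) (h3 : j ≠ p) (h4 : j ≠ q) (x y : A ⊗[k] A) :
    Commute (leg2 k A n i j hij x) (leg2 k A n p q hpq y) := by
  induction x with
  | zero => rw [map_zero]; exact Commute.zero_left _
  | add u v hu hv => rw [map_add]; exact hu.add_left hv
  | tmul a b =>
    induction y with
    | zero => rw [map_zero]; exact Commute.zero_right _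
    | add u v hu hv => rw [map_add]; exact hu.add_right hv
    | tmul c d =>
      rw [leg2_tmul, leg2_tmul]
      exact ((commute_single k A n h1 a c).mul_right (commute_single k A n h2 a d)).mul_left
        ((commute_single k A n h3 b c).mul_right (commute_single k A n h4 b d))

lemma leg2_commute_shared (C : Type*) [CommRing C] [Algebra k C] (f : C →ₐ[k] A)
    (i0 i j : Fin n) (hi : i0 ≠ i) (hj : i0 ≠ j) (u v : C ⊗[k] C) :
    Commute (leg2 k A n i0 i hi ((Algebra.TensorProduct.map f f) u))
      (leg2 k A n i0 j hj ((Algebra.TensorProduct.map f f) v)) := by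
  have hcm : ∀ c d : C, Commute (f c) (f d) := fun c d => by
    show f c * f d = f d * f c
    rw [← map_mul, ← map_mul, mul_comm]
  induction u with
  | zero => rw [map_zero, map_zero]; exact Commute.zero_left _
  | add x y hx hy => rw [map_add, map_add]; exact hx.add_left hy
  | tmul a b =>
    induction v with
    | zero => rw [map_zero, map_zero]; exact Commute.zero_right _
    | add x y hx hy => rw [map_add, map_add]; exact hx.add_right hy
    | tmul c d =>
      rw [Algebra.TensorProduct.map_tmul, Algebra.TensorProduct.map_tmul, leg2_tmul, leg2_tmul]
      have c1 : Commute
          ((PiTensorProduct.singleAlgHom (R := k) (A := fun _ : Fin n => A) i0) (f a))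
          ((PiTensorProduct.singleAlgHom (R := k) (A := fun _ : Fin n => A) i0) (f c)) := by
        have h0 := congrArg (PiTensorProduct.singleAlgHom (R := k)
          (A := fun _ : Fin n => A) i0) (hcm a c).eq
        rw [map_mul, map_mul] at h0
        exact h0
      have c2 := commute_single k A n hj (f a) (f d)
      have c3 := commute_single k A n (Ne.symm hi) (f b) (f c)
      have c4 : Commute
          ((PiTensorProduct.singleAlgHom (R := k) (A := fun _ : Fin n => A) i) (f b))
          ((PiTensorProduct.singleAlgHom (R := k) (A := fun _ : Fin n => A) j) (f d)) := by
        by_cases hij : i = j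
        · rw [hij]
          have h0 := congrArg (PiTensorProduct.singleAlgHom (R := k)
            (A := fun _ : Fin n => A) j) (hcm b d).eq
          rw [map_mul, map_mul] at h0
          exact h0
        · exact commute_single k A n hij (f b) (f d)
      exact (c1.mul_right c2).mul_left (c3.mul_right c4)

lemma uleg_val (i j : ℕ) (h : 1 ≤ i ∧ i ≤ n ∧ 1 ≤ j ∧ j ≤ n ∧ i ≠ j) (u : (A ⊗[k] A)ˣ) :
    (uleg k A n i j u : TPow k A n)
      = leg2 k A n ⟨i - 1, by omega⟩ ⟨j - 1, by omega⟩
          (Fin.ne_of_val_ne (by simp only []; omega)) (u : A ⊗[k] A) := by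
  unfold uleg
  rw [dif_pos h]
  rfl

lemma units_commute_of_val {M : Type*} [Monoid M] {u v : Mˣ}
    (h : Commute (u : M) (v : M)) : Commute u v :=
  Units.ext (by rw [Units.val_mul, Units.val_mul]; exact h)

lemma pw_of_forall {α : Type*} {R : α → α → Prop} (h : ∀ a b, R a b) :
    ∀ l : List α, l.Pairwise R
  | [] => .nil
  | a :: l => .cons (fun b _ => h a b) (pw_of_forall h l)

theorem prod_K_commutes_with_prod_Rinv
    (C : Type*) [CommRing C] [Algebra k C]
    (f : C →ₐ[k] A) (hf : Function.Injective f)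
    (hn : 3 ≤ n)
    (R : (A ⊗[k] A)ˣ) (K : (C ⊗[k] C)ˣ)
    -- `K` viewed inside `A ⊗ A`
    (KA : (A ⊗[k] A)ˣ)
    (hKA : KA = Units.map (Algebra.TensorProduct.map f f).toMonoidHom K)
    -- `K^{1,2}K^{1,3}` commutes with `R^{2,3}` in `A^{⊗3}`
    (hcomm : Commute (uleg k A 3 1 2 KA * uleg k A 3 1 3 KA) (uleg k A 3 2 3 R)) :
    ordProd 3 n (fun i => (uleg k A n 2 i R)⁻¹) * ordProd 2 n (fun i => uleg k A n 1 i KA) =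
      ordProd 2 n (fun i => uleg k A n 1 i KA) *
        ordProd 3 n (fun i => (uleg k A n 2 i R)⁻¹) := by
  set Kf : ℕ → (TPow k A n)ˣ := fun i => uleg k A n 1 i KA with hKf
  set Rf : ℕ → (TPow k A n)ˣ := fun i => uleg k A n 2 i R with hRf
  -- all K-legs pairwise commute
  have hKval : (KA : A ⊗[k] A) = (Algebra.TensorProduct.map f f) (K : C ⊗[k] C) := by
    rw [hKA]; rfl
  have hKcomm : ∀ a b : ℕ, Commute (Kf a) (Kf b) := by
    intro a b
    by_cases ha : 1 ≤ 1 ∧ 1 ≤ n ∧ 1 ≤ a ∧ a ≤ n ∧ 1 ≠ a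
    · by_cases hb : 1 ≤ 1 ∧ 1 ≤ n ∧ 1 ≤ b ∧ b ≤ n ∧ 1 ≠ b
      · apply units_commute_of_val
        rw [hKf]
        rw [uleg_val k A n 1 a ha, uleg_val k A n 1 b hb, hKval]
        exact leg2_commute_shared k A n C f _ _ _ _ _ _ _
      · have : Kf b = 1 := by rw [hKf]; simp only; unfold uleg; rw [dif_neg hb]
        rw [this]; exact Commute.one_right _
    · have : Kf a = 1 := by rw [hKf]; simp only; unfold uleg; rw [dif_neg ha]
      rw [this]; exact Commute.one_left _
  -- R-leg at (2,i) commutes with K-leg at (1,j) when j ∉ {i, 2}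
  have hdisj : ∀ i j : ℕ, 3 ≤ i → i ≤ n → 3 ≤ j → j ≤ n → j ≠ i →
      Commute (Rf i) (Kf j) := by
    intro i j h3i hin h3j hjn hji
    apply units_commute_of_val
    rw [hKf, hRf]
    rw [uleg_val k A n 2 i (by omega), uleg_val k A n 1 j (by omega), hKval]
    apply leg2_commute_disjoint <;> (apply Fin.ne_of_val_ne; simp only; omega)
  -- transported hypothesis : (K^{1,2} K^{1,i}) commutes with R^{2,i}
  have htrans : ∀ i : ℕ, 3 ≤ i → i ≤ n → Commute (Kf 2 * Kf i) (Rf i) := by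
    intro i h3i hin
    set σ : Fin 3 → Fin n := fun t => ⟨if t.val = 2 then i - 1 else t.val, by
      rcases t with ⟨tv, htv⟩; dsimp only; split <;> omega⟩ with hσdef
    have hσ : Function.Injective σ := by
      intro a b hab
      have h := congrArg Fin.val hab
      simp only [hσdef] at h
      have ha := a.isLt
      have hb := b.isLt
      apply Fin.ext
      split_ifs at h <;> omega
    have hmap := hcomm.map (Units.map (extAlg k A hσ).toMonoidHom)
    rw [map_mul] at hmap
    have key : ∀ (p q p' q' : ℕ)
        (h3 : 1 ≤ p ∧ p ≤ 3 ∧ 1 ≤ q ∧ q ≤ 3 ∧ p ≠ q)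
        (hup : (σ ⟨p - 1, by omega⟩).val = p' - 1) (huq : (σ ⟨q - 1, by omega⟩).val = q' - 1)
        (h5 : 1 ≤ p' ∧ p' ≤ n ∧ 1 ≤ q' ∧ q' ≤ n ∧ p' ≠ q') (u : (A ⊗[k] A)ˣ),
        Units.map (extAlg k A hσ).toMonoidHom (uleg k A 3 p q u) = uleg k A n p' q' u := by
      intro p q p' q' h3 hup huq h5 u
      apply Units.ext
      rw [Units.coe_map]
      show extAlg k A hσ ((uleg k A 3 p q u : TPow k A 3)) = _
      rw [uleg_val k A 3 p q h3, uleg_val k A n p' q' h5, extAlg_leg2]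
      exact leg2_congr k A n (Fin.ext hup) (Fin.ext huq) _ _
    rw [key 1 2 1 2 (by omega) (by simp [hσdef]) (by simp [hσdef]) (by omega),
        key 1 3 1 i (by omega) (by simp [hσdef]) (by simp [hσdef]) (by omega),
        key 2 3 2 i (by omega) (by simp [hσdef]) (by simp [hσdef]) (by omega)] at hmap
    exact hmap
  -- main computation
  have hsplit : List.range' 2 (n + 1 - 2) = 2 :: List.range' 3 (n - 2) := by
    have h : n + 1 - 2 = (n - 2) + 1 := by omega
    rw [h, List.range'_succ]
  have keyi : ∀ i : ℕ, 3 ≤ i → i ≤ n →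
      Commute (Rf i) (ordProd 2 n Kf) := by
    intro i h3i hin
    have hmem : i ∈ List.range' 3 (n - 2) := by
      rw [List.mem_range'_1]; omega
    have hperm : List.Perm ((List.range' 3 (n - 2)).map Kf)
        ((i :: (List.range' 3 (n - 2)).erase i).map Kf) :=
      (List.perm_cons_erase hmem).map Kf
    have hpair : ((List.range' 3 (n - 2)).map Kf).Pairwise Commute := by
      rw [List.pairwise_map]
      exact pw_of_forall (fun a b => hKcomm a b) _
    have hprod : ((List.range' 3 (n - 2)).map Kf).prod
        = Kf i * (((List.range' 3 (n - 2)).erase i).map Kf).prod := by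
      rw [hperm.prod_eq' hpair, List.map_cons, List.prod_cons]
    have hQ : Commute (Rf i) ((((List.range' 3 (n - 2)).erase i).map Kf).prod) := by
      apply Commute.list_prod_right
      intro x hx
      obtain ⟨j, hj, rfl⟩ := List.mem_map.1 hx
      have hj' := (List.Nodup.mem_erase_iff (List.nodup_range' (h := Nat.one_pos))).1 hj
      have hjr := List.mem_range'_1.1 hj'.2
      exact hdisj i j h3i hin (by omega) (by omega) hj'.1
    unfold ordProd
    rw [hsplit, List.map_cons, List.prod_cons, hprod, ← mul_assoc]
    exact ((htrans i h3i hin).symm).mul_right hQ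
  have final : Commute (ordProd 3 n (fun i => (uleg k A n 2 i R)⁻¹))
      (ordProd 2 n (fun i => uleg k A n 1 i KA)) := by
    unfold ordProd
    apply Commute.list_prod_left
    intro x hx
    obtain ⟨i, hi, rfl⟩ := List.mem_map.1 hx
    have hir := List.mem_range'_1.1 hi
    exact (keyi i (by omega) (by omega)).inv_left
  exact final.eq

end
end

section
/- Let k be a commutative ring, A an associative unital k-algebra, and R ∈ (A⊗A)^× an invertible solution of the quantum Yang–Baxter equation R^{1,2}R^{1,3}R^{2,3} = R^{2,3}R^{1,3}R^{1,2} in A^{⊗3}. Then for every n ≥ 2, in A^{⊗n} (slots numbered 1,…,n, products in increasing order of i): (R^{1,2})^{-1} · (∏_{i=3}^{n} (R^{2,i}R^{1,i})^{-1}) · R^{1,2} = ∏_{i=3}^{n} (R^{1,i}R^{2,i})^{-1}. -/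
/-!
STATEMENT 3: For an invertible solution `R` of the quantum Yang–Baxter equation, the
conjugation identity
`(R^{1,2})⁻¹ · ∏_{i=3}^{n} (R^{2,i}R^{1,i})⁻¹ · R^{1,2} = ∏_{i=3}^{n} (R^{1,i}R^{2,i})⁻¹`
holds in `A^{⊗n}`.
-/

open scoped TensorProduct

noncomputable section

variable (k : Type*) [CommRing k]
variable (A : Type*) [Ring A] [Algebra k A]
variable (n : ℕ)

lemma aux3 {M : Type*} [Monoid M] {a0 a1 a2 b0 b1 b2 : M} (h01 : Commute b0 a1)
    (h02 : Commute b0 a2) (h12 : Commute b1 a2) :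
    (a0*b0)*((a1*b1)*(a2*b2)) = (a0*(a1*a2))*(b0*(b1*b2)) := by
  rw [h12.mul_mul_mul_comm, (h01.mul_right h02).mul_mul_mul_comm, mul_assoc, mul_assoc]


set_option maxHeartbeats 1000000 in
def leg3 (σ : Fin 3 → Fin n) (hσ : Function.Injective σ) :
    (⨂[k] (_ : Fin 3), A) →ₐ[k] TPow k A n :=
  PiTensorProduct.liftAlgHom
    ((MultilinearMap.mkPiAlgebraFin k 3 (TPow k A n)).compLinearMap
      (fun i => (PiTensorProduct.singleAlgHom (R := k) (A := fun _ : Fin n => A) (σ i)).toLinearMap))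
    (by simp [PiTensorProduct.one_def])
    (fun x y => by
      simp only [MultilinearMap.compLinearMap_apply, AlgHom.toLinearMap_apply, Pi.mul_apply,
        map_mul, MultilinearMap.mkPiAlgebraFin_apply, List.ofFn_succ, List.ofFn_zero, List.prod_cons,
        List.prod_nil, mul_one]
      exact aux3 (commute_single k A n (fun h => absurd (hσ h) (by decide)) _ _)
        (commute_single k A n (fun h => absurd (hσ h) (by decide)) _ _)
        (commute_single k A n (fun h => absurd (hσ h) (by decide)) _ _))

lemma leg3_single (σ : Fin 3 → Fin n) (hσ : Function.Injective σ) (i : Fin 3) (a : A) :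
    leg3 k A n σ hσ (PiTensorProduct.singleAlgHom (R := k) (A := fun _ : Fin 3 => A) i a) =
      PiTensorProduct.singleAlgHom (R := k) (A := fun _ : Fin n => A) (σ i) a := by
  have : (PiTensorProduct.singleAlgHom (R := k) (A := fun _ : Fin 3 => A) i a) =
      PiTensorProduct.tprod k (Pi.mulSingle i a) := rfl
  rw [this, leg3, PiTensorProduct.liftAlgHom_apply, PiTensorProduct.lift.tprod]
  simp only [MultilinearMap.compLinearMap_apply, AlgHom.toLinearMap_apply,
    MultilinearMap.mkPiAlgebraFin_apply, List.ofFn_succ, List.ofFn_zero, List.prod_cons,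
    List.prod_nil, mul_one]
  fin_cases i <;>
    simp [Pi.mulSingle_eq_same, Pi.mulSingle_eq_of_ne, map_one, one_mul, mul_one,
      show ((1 : Fin 3) : Fin 3) ≠ 0 from by decide]

lemma leg3_leg2 (σ : Fin 3 → Fin n) (hσ : Function.Injective σ) (p q : Fin 3) (h : p ≠ q)
    (z : A ⊗[k] A) :
    leg3 k A n σ hσ (leg2 k A 3 p q h z) =
      leg2 k A n (σ p) (σ q) (fun e => h (hσ e)) z := by
  have : ((leg3 k A n σ hσ).comp (leg2 k A 3 p q h)) z =
      leg2 k A n (σ p) (σ q) (fun e => h (hσ e)) z := by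
    refine congrFun (congrArg _ (Algebra.TensorProduct.ext' fun a b => ?_)) z
    simp only [AlgHom.comp_apply, leg2, Algebra.TensorProduct.lift_tmul, map_mul,
      leg3_single]
  simpa using this

lemma leg2_congr_s2 {p q p' q' : Fin n} (hp : p = p') (hq : q = q') (h : p ≠ q) (z : A ⊗[k] A) :
    leg2 k A n p q h z = leg2 k A n p' q' (hp ▸ hq ▸ h) z := by
  subst hp; subst hq; rfl

lemma qybe_n (R : (A ⊗[k] A)ˣ)
    (hQYBE : uleg k A 3 1 2 R * uleg k A 3 1 3 R * uleg k A 3 2 3 R =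
      uleg k A 3 2 3 R * uleg k A 3 1 3 R * uleg k A 3 1 2 R)
    (i : ℕ) (h3 : 3 ≤ i) (hin : i ≤ n) :
    uleg k A n 1 2 R * uleg k A n 1 i R * uleg k A n 2 i R =
      uleg k A n 2 i R * uleg k A n 1 i R * uleg k A n 1 2 R := by
  set σ : Fin 3 → Fin n := ![⟨0, by omega⟩, ⟨1, by omega⟩, ⟨i - 1, by omega⟩] with hσdef
  have hval : ∀ a : Fin 3, (σ a).val = ![0, 1, i - 1] a := by
    intro a
    fin_cases a <;> simp [σ]
  have hσ : Function.Injective σ := by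
    intro a b hab
    have h2 := congrArg Fin.val hab
    rw [hval, hval] at h2
    fin_cases a <;> fin_cases b <;> simp at h2 ⊢ <;> omega
  let M : (⨂[k] (_ : Fin 3), A)ˣ →* (TPow k A n)ˣ :=
    Units.map (leg3 k A n σ hσ).toMonoidHom
  have emap : ∀ (a b : ℕ) (pf3 : 1 ≤ a ∧ a ≤ 3 ∧ 1 ≤ b ∧ b ≤ 3 ∧ a ≠ b)
      (a' b' : ℕ) (pfn : 1 ≤ a' ∧ a' ≤ n ∧ 1 ≤ b' ∧ b' ≤ n ∧ a' ≠ b')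
      (ha : σ ⟨a - 1, by omega⟩ = ⟨a' - 1, by omega⟩)
      (hb : σ ⟨b - 1, by omega⟩ = ⟨b' - 1, by omega⟩),
      M (uleg k A 3 a b R) = uleg k A n a' b' R := by
    intro a b pf3 a' b' pfn ha hb
    rw [uleg, dif_pos pf3, uleg, dif_pos pfn]
    apply Units.ext
    show leg3 k A n σ hσ ((leg2 k A 3 _ _ _) (R : A ⊗[k] A)) = _
    rw [leg3_leg2, leg2_congr_s2 k A n ha hb]
    rfl
  have e12 := emap 1 2 (by omega) 1 2 (by omega)
    (by apply Fin.ext; rw [hval]; simp) (by apply Fin.ext; rw [hval]; simp)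
  have e13 := emap 1 3 (by omega) 1 i (by omega)
    (by apply Fin.ext; rw [hval]; simp) (by apply Fin.ext; rw [hval]; simp)
  have e23 := emap 2 3 (by omega) 2 i (by omega)
    (by apply Fin.ext; rw [hval]; simp) (by apply Fin.ext; rw [hval]; simp)
  have hM := congrArg M hQYBE
  simpa only [map_mul, e12, e13, e23] using hM

lemma qybe_conj_inv {G : Type*} [Group G] {s u v : G} (h : s * u * v = v * u * s) :
    s⁻¹ * (v * u)⁻¹ * s = (u * v)⁻¹ := by
  have h2 : v * u = s * (u * v) * s⁻¹ := by
    rw [← mul_assoc, h]; group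
  rw [h2]; group

lemma conj_prod {G : Type*} [Group G] (s : G) (f g : ℕ → G) :
    ∀ l : List ℕ, (∀ i ∈ l, s⁻¹ * f i * s = g i) →
      s⁻¹ * (l.map f).prod * s = (l.map g).prod
  | [], _ => by simp
  | a :: t, h => by
    simp only [List.map_cons, List.prod_cons]
    have ht := conj_prod s f g t (fun i hi => h i (List.mem_cons_of_mem a hi))
    rw [← h a List.mem_cons_self, ← ht]
    group

theorem qybe_conjugation_identity (hn : 2 ≤ n) (R : (A ⊗[k] A)ˣ)
    -- the quantum Yang–Baxter equation `R^{1,2}R^{1,3}R^{2,3} = R^{2,3}R^{1,3}R^{1,2}`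
    -- in `A^{⊗3}`
    (hQYBE : uleg k A 3 1 2 R * uleg k A 3 1 3 R * uleg k A 3 2 3 R =
      uleg k A 3 2 3 R * uleg k A 3 1 3 R * uleg k A 3 1 2 R) :
    ((uleg k A n 1 2 R)⁻¹ *
        ordProd 3 n (fun i => (uleg k A n 2 i R * uleg k A n 1 i R)⁻¹) *
        uleg k A n 1 2 R : (TPow k A n)ˣ) =
      ordProd 3 n (fun i => (uleg k A n 1 i R * uleg k A n 2 i R)⁻¹) := by
  rw [ordProd, ordProd]
  refine conj_prod _ _ _ _ (fun i hi => ?_)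
  rw [List.mem_range'_1] at hi
  exact qybe_conj_inv (qybe_n k A n R hQYBE i hi.1 (by omega))

end
end

section
/- Let k be a commutative ring containing ℚ, let H be a commutative k-algebra, let m : H⊗H → H be the multiplication, and let t ∈ H⊗H be symmetric (τ(t) = t, where τ is the flip). Let Δ : H → H⊗H be a k-algebra morphism such that (id⊗Δ)(t) = t^{1,2} + t^{1,3} in H^{⊗3} and Δ(m(t)) = m(t)⊗1 + 1⊗m(t) + 2t. Then in the power series algebra (H^{⊗3})[[ℏ]] one has (id_H⊗Δ)( exp(ℏ·(t^{1,2} + (1/2)t^{2,2})) ) = exp(ℏ·(t^{1,2} + (1/2)t^{2,2})) · exp(ℏ·(t^{1,3} + (1/2)t^{3,3})) · exp(ℏ·t^{2,3}), where (id_H⊗Δ) is extended ℏ-linearly from H^{⊗2} to (H^{⊗2})[[ℏ]] → (H^{⊗3})[[ℏ]]. -/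
/-!
STATEMENT 11: The identity `(id⊗Δ)(exp(ℏ(t^{1,2} + ½t^{2,2}))) =
exp(ℏ(t^{1,2} + ½t^{2,2}))·exp(ℏ(t^{1,3} + ½t^{3,3}))·exp(ℏ t^{2,3})`
in `(H^{⊗3})[[ℏ]]`, for a commutative algebra `H` with a coproduct-like map `Δ`,
a symmetric tensor `t` with `(id⊗Δ)(t) = t^{1,2} + t^{1,3}` and
`Δ(m(t)) = m(t)⊗1 + 1⊗m(t) + 2t`.
-/

open scoped TensorProduct

noncomputable section

variable (k : Type*) [CommRing k] [Algebra ℚ k]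
variable (H : Type*) [CommRing H] [Algebra k H]

/-- `exp(ℏ·x)` as a formal power series in `ℏ` with coefficients `xⁿ/n!`. -/
def pexp {T : Type*} [CommRing T] [Algebra k T] (x : T) : PowerSeries T :=
  PowerSeries.mk fun n => (algebraMap ℚ k ((n.factorial : ℚ)⁻¹)) • x ^ n

/-- leg map `x ↦ x^{1,2}` from `H⊗H` to `H⊗H⊗H`. -/
def leg12 : H ⊗[k] H →ₐ[k] H ⊗[k] (H ⊗[k] H) :=
  Algebra.TensorProduct.map (AlgHom.id k H) Algebra.TensorProduct.includeLeft

/-- leg map `x ↦ x^{1,3}` from `H⊗H` to `H⊗H⊗H`. -/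
def leg13 : H ⊗[k] H →ₐ[k] H ⊗[k] (H ⊗[k] H) :=
  Algebra.TensorProduct.map (AlgHom.id k H) Algebra.TensorProduct.includeRight

/-- leg map `x ↦ x^{2,3}` from `H⊗H` to `H⊗H⊗H`. -/
def leg23 : H ⊗[k] H →ₐ[k] H ⊗[k] (H ⊗[k] H) :=
  Algebra.TensorProduct.includeRight

/-- inclusion of `H` into slot 2 of `H⊗H⊗H`. -/
def slot2 : H →ₐ[k] H ⊗[k] (H ⊗[k] H) :=
  (Algebra.TensorProduct.includeRight).comp Algebra.TensorProduct.includeLeft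

/-- inclusion of `H` into slot 3 of `H⊗H⊗H`. -/
def slot3 : H →ₐ[k] H ⊗[k] (H ⊗[k] H) :=
  (Algebra.TensorProduct.includeRight).comp Algebra.TensorProduct.includeRight

theorem pexp_map {T S : Type*} [CommRing T] [Algebra k T] [CommRing S] [Algebra k S]
    (f : T →ₐ[k] S) (x : T) :
    PowerSeries.map f.toRingHom (pexp k x) = pexp k (f x) := by
  ext n
  simp [pexp, PowerSeries.coeff_map, map_pow]

theorem pexp_mul {T : Type*} [CommRing T] [Algebra k T] (a b : T) :
    pexp k a * pexp k b = pexp k (a + b) := by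
  ext n
  rw [PowerSeries.coeff_mul]
  simp only [pexp, PowerSeries.coeff_mk]
  rw [add_pow, Finset.smul_sum, Finset.Nat.sum_antidiagonal_eq_sum_range_succ_mk]
  refine Finset.sum_congr rfl fun i hi => ?_
  have hin : i ≤ n := Nat.lt_succ_iff.mp (Finset.mem_range.mp hi)
  rw [smul_mul_smul_comm]
  rw [mul_comm (a ^ i * b ^ (n - i)) (n.choose i : T)]
  rw [← nsmul_eq_mul]
  rw [← Nat.cast_smul_eq_nsmul k]
  rw [smul_smul]
  congr 1
  rw [← map_natCast (algebraMap ℚ k) (n.choose i), ← map_mul, ← map_mul]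
  congr 1
  rw [Nat.cast_choose ℚ hin]
  have h1 : ((i,n-i).1.factorial : ℚ) ≠ 0 := Nat.cast_ne_zero.mpr (Nat.factorial_ne_zero _)
  have h2 : ((i,n-i).2.factorial : ℚ) ≠ 0 := Nat.cast_ne_zero.mpr (Nat.factorial_ne_zero _)
  have h3 : ((n).factorial : ℚ) ≠ 0 := Nat.cast_ne_zero.mpr (Nat.factorial_ne_zero _)
  field_simp

theorem coproduct_of_exponential
    (Δ : H →ₐ[k] H ⊗[k] H) (t : H ⊗[k] H)
    (hsym : (Algebra.TensorProduct.comm k H H) t = t)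
    (hcop : (Algebra.TensorProduct.map (AlgHom.id k H) Δ) t = leg12 k H t + leg13 k H t)
    (hmt : Δ ((Algebra.TensorProduct.lmul' k (S := H)) t) =
      ((Algebra.TensorProduct.lmul' k (S := H)) t) ⊗ₜ[k] 1
        + 1 ⊗ₜ[k] ((Algebra.TensorProduct.lmul' k (S := H)) t) + 2 • t) :
    PowerSeries.map ((Algebra.TensorProduct.map (AlgHom.id k H) Δ).toRingHom)
        (pexp k (t + (algebraMap ℚ k (1/2)) •
          (Algebra.TensorProduct.includeRight ((Algebra.TensorProduct.lmul' k (S := H)) t)))) =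
      pexp k (leg12 k H t + (algebraMap ℚ k (1/2)) •
          (slot2 k H ((Algebra.TensorProduct.lmul' k (S := H)) t)))
        * pexp k (leg13 k H t + (algebraMap ℚ k (1/2)) •
          (slot3 k H ((Algebra.TensorProduct.lmul' k (S := H)) t)))
        * pexp k (leg23 k H t) := by
  set mt := (Algebra.TensorProduct.lmul' k (S := H)) t with hmtdef
  rw [pexp_map, pexp_mul, pexp_mul]
  congr 1
  have hF : (Algebra.TensorProduct.map (AlgHom.id k H) Δ)
      ((Algebra.TensorProduct.includeRight : H →ₐ[k] H ⊗[k] H) mt)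
      = slot2 k H mt + slot3 k H mt + (leg23 k H t + leg23 k H t) := by
    rw [Algebra.TensorProduct.includeRight_apply, Algebra.TensorProduct.map_tmul,
      hmt]
    simp only [slot2, slot3, leg23, AlgHom.comp_apply,
      Algebra.TensorProduct.includeRight_apply, Algebra.TensorProduct.includeLeft_apply,
      map_one, two_smul, TensorProduct.tmul_add]
  rw [map_add, map_smul, hF, hcop]
  have half : ∀ x : H ⊗[k] (H ⊗[k] H), (algebraMap ℚ k (1/2)) • (x + x) = x := by
    intro x
    rw [← two_smul k x, smul_smul, ← map_ofNat (algebraMap ℚ k) 2, ← map_mul]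
    norm_num
  rw [smul_add, smul_add, half]
  abel

end
end
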